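/- Let n ≥ 1 and β > −1, and define v : (−1,1) → ℝ by v(h) = μ_{n,β}({x ∈ ℝⁿ : xₙ ≥ h}), the beta measure of the cap of Bₙ cut off by the halfspace {xₙ ≥ h}. Then for every h ∈ (−1,1), v is differentiable at h with v'(h) = −c_{1,β+(n−1)/2} · (1−h²)^{β+(n−1)/2}. -/

import Mathlib

open MeasureTheory

/-- The normalization constant `c_{m,β} = Γ(m/2+β+1)/(π^{m/2} Γ(β+1))` of the
beta distribution on the unit ball of `ℝ^m`. -/
noncomputable def betaConst (m : ℕ) (β : ℝ) : ℝ :=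
  Real.Gamma ((m : ℝ) / 2 + β + 1) / (Real.pi ^ ((m : ℝ) / 2) * Real.Gamma (β + 1))

/-- The density `f_{m,β}(x) = c_{m,β}(1−‖x‖²)^β · 1_{‖x‖<1}` of the beta distribution. -/
noncomputable def betaDensity (m : ℕ) (β : ℝ) (x : EuclideanSpace ℝ (Fin m)) : ℝ :=
  if ‖x‖ < 1 then betaConst m β * (1 - ‖x‖ ^ 2) ^ β else 0

/-- The beta probability measure `μ_{m,β}` on the unit ball of `ℝ^m`. -/
noncomputable def betaMeasure (m : ℕ) (β : ℝ) : Measure (EuclideanSpace ℝ (Fin m)) :=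
  volume.withDensity fun x => ENNReal.ofReal (betaDensity m β x)

open Set

noncomputable def ball1 (β : ℝ) {m : ℕ} (y : EuclideanSpace ℝ (Fin m)) : ℝ :=
  if ‖y‖ ^ 2 < 1 then (1 - ‖y‖ ^ 2) ^ β else 0

noncomputable def g0 (γ : ℝ) (t : ℝ) : ℝ := if t ^ 2 < 1 then (1 - t ^ 2) ^ γ else 0

lemma measurable_g0 (γ : ℝ) : Measurable (g0 γ) := by
  unfold g0
  exact Measurable.ite (measurableSet_lt (by fun_prop) measurable_const) (by fun_prop)
    measurable_const

lemma measurable_ball1 (β : ℝ) (m : ℕ) : Measurable (ball1 β (m := m)) := by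
  unfold ball1
  exact Measurable.ite (measurableSet_lt (by fun_prop) measurable_const) (by fun_prop)
    measurable_const

lemma ball1_nonneg (β : ℝ) {m : ℕ} (y : EuclideanSpace ℝ (Fin m)) : 0 ≤ ball1 β y := by
  unfold ball1; split_ifs with h
  · exact Real.rpow_nonneg (by linarith) _
  · exact le_refl 0

lemma g0_nonneg (γ t : ℝ) : 0 ≤ g0 γ t := by
  unfold g0; split_ifs with h
  · exact Real.rpow_nonneg (by linarith) _
  · exact le_refl 0

lemma betaConst_pos {m : ℕ} {β : ℝ} (hβ : -1 < β) : 0 < betaConst m β := by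
  have h0 : (0:ℝ) ≤ (m:ℝ)/2 := by positivity
  apply div_pos (Real.Gamma_pos_of_pos (by linarith))
  exact mul_pos (Real.rpow_pos_of_pos Real.pi_pos _) (Real.Gamma_pos_of_pos (by linarith))

lemma one_le_two_rpow_abs (γ : ℝ) : (1:ℝ) ≤ 2 ^ |γ| := by
  rw [show (1:ℝ) = (2:ℝ) ^ (0:ℝ) by simp]
  exact Real.rpow_le_rpow_left_iff (by norm_num) |>.mpr (abs_nonneg γ)

lemma aux_rpow_le {u γ : ℝ} (hu1 : 1 ≤ u) (hu2 : u ≤ 2) : u ^ γ ≤ 2 ^ |γ| := by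
  rcases le_or_gt 0 γ with hγ | hγ
  · rw [abs_of_nonneg hγ]
    exact Real.rpow_le_rpow (by linarith) hu2 hγ
  · calc u ^ γ ≤ 1 ^ γ := Real.rpow_le_rpow_of_nonpos (by linarith) hu1 hγ.le
      _ = 1 := Real.one_rpow γ
      _ ≤ 2 ^ |γ| := one_le_two_rpow_abs γ

lemma integrable_g0 {γ : ℝ} (hγ : -1 < γ) : Integrable (g0 γ) := by
  have hind : g0 γ = (Ioo (-1:ℝ) 1).indicator (fun t => (1 - t^2) ^ γ) := by
    funext t
    by_cases h : t ^ 2 < 1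
    · have ht : t ∈ Ioo (-1:ℝ) 1 := by
        rw [mem_Ioo, ← abs_lt]; exact (sq_lt_one_iff_abs_lt_one t).mp h
      simp [g0, h, indicator_of_mem ht]
    · have ht : t ∉ Ioo (-1:ℝ) 1 := by
        rw [mem_Ioo, ← abs_lt]; intro hc; exact h ((sq_lt_one_iff_abs_lt_one t).mpr hc)
      simp [g0, h, indicator_of_notMem ht]
  rw [hind, integrable_indicator_iff measurableSet_Ioo]
  have hmeas : AEStronglyMeasurable (fun t : ℝ => (1 - t^2) ^ γ) volume :=
    (by fun_prop : Measurable fun t : ℝ => (1 - t^2) ^ γ).aestronglyMeasurable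
  have hsub : Ioo (-1:ℝ) 1 ⊆ Ioc (-1:ℝ) 0 ∪ Icc 0 1 := by
    intro t ht
    rcases le_or_gt t 0 with h | h
    · exact Or.inl ⟨ht.1, h⟩
    · exact Or.inr ⟨h.le, ht.2.le⟩
  apply IntegrableOn.mono_set _ hsub
  apply IntegrableOn.union
  · -- on Ioc (-1) 0, bound by 2^|γ| * (1+t)^γ
    have hbase : IntervalIntegrable (fun x : ℝ => x ^ γ) volume 0 1 :=
      intervalIntegral.intervalIntegrable_rpow' hγ
    have h1 : IntervalIntegrable (fun x : ℝ => (1 + x) ^ γ) volume (0 - 1) (1 - 1) := by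
      simpa using hbase.comp_add_left 1
    have h2 : IntegrableOn (fun x : ℝ => (1 + x) ^ γ) (Ioc (-1:ℝ) 0) volume := by
      have := h1.def'
      norm_num at this
      exact this
    apply Integrable.mono' ((h2.const_mul ((2:ℝ) ^ |γ|)))
      (hmeas.restrict)
    filter_upwards [ae_restrict_mem measurableSet_Ioc] with t ht
    have h1t : (0:ℝ) < 1 + t := by linarith [ht.1]
    have h2t : (0:ℝ) ≤ 1 - t := by linarith [ht.2]
    have : (1 - t^2 : ℝ) = (1 - t) * (1 + t) := by ring
    rw [Real.norm_eq_abs, abs_of_nonneg (Real.rpow_nonneg (by nlinarith) _), this,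
      Real.mul_rpow h2t h1t.le]
    have hb : (1 - t) ^ γ ≤ 2 ^ |γ| := aux_rpow_le (by linarith [ht.2]) (by linarith [ht.1])
    have hnn : (0:ℝ) ≤ (1 + t) ^ γ := Real.rpow_nonneg h1t.le _
    exact mul_le_mul_of_nonneg_right hb hnn
  · -- on Icc 0 1, bound by 2^|γ| * (1-t)^γ
    have hbase : IntervalIntegrable (fun x : ℝ => x ^ γ) volume 0 1 :=
      intervalIntegral.intervalIntegrable_rpow' hγ
    have h1 : IntervalIntegrable (fun x : ℝ => (1 - x) ^ γ) volume (1 - 0) (1 - 1) :=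
      hbase.comp_sub_left 1
    have h2 : IntegrableOn (fun x : ℝ => (1 - x) ^ γ) (Icc (0:ℝ) 1) volume := by
      have := h1.def'
      norm_num at this
      exact this.congr_set_ae Ioc_ae_eq_Icc.symm
    apply Integrable.mono' (h2.const_mul ((2:ℝ) ^ |γ|)) hmeas.restrict
    filter_upwards [ae_restrict_mem measurableSet_Icc] with t ht
    have h1t : (0:ℝ) ≤ 1 - t := by linarith [ht.2]
    have h2t : (0:ℝ) ≤ 1 + t := by linarith [ht.1]
    have : (1 - t^2 : ℝ) = (1 + t) * (1 - t) := by ring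
    rw [Real.norm_eq_abs, abs_of_nonneg (Real.rpow_nonneg (by nlinarith) _), this,
      Real.mul_rpow h2t h1t]
    have hb : (1 + t) ^ γ ≤ 2 ^ |γ| := aux_rpow_le (by linarith [ht.1]) (by linarith [ht.2])
    have hnn : (0:ℝ) ≤ (1 - t) ^ γ := Real.rpow_nonneg h1t _
    exact mul_le_mul_of_nonneg_right hb hnn

lemma real_beta {a b : ℝ} (ha : 0 < a) (hb : 0 < b) :
    ∫ x in (0:ℝ)..1, x ^ (a - 1) * (1 - x) ^ (b - 1) =
      Real.Gamma a * Real.Gamma b / Real.Gamma (a + b) := by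
  have h := Complex.Gamma_mul_Gamma_eq_betaIntegral (s := (a:ℂ)) (t := (b:ℂ))
    (by simpa using ha) (by simpa using hb)
  have e : Complex.betaIntegral (a:ℂ) (b:ℂ) =
      ((∫ x in (0:ℝ)..1, x ^ (a - 1) * (1 - x) ^ (b - 1) : ℝ) : ℂ) := by
    rw [Complex.betaIntegral, ← intervalIntegral.integral_ofReal]
    apply intervalIntegral.integral_congr
    intro x hx
    rw [uIcc_of_le zero_le_one] at hx
    push_cast
    rw [Complex.ofReal_cpow hx.1, Complex.ofReal_cpow (by linarith [hx.2])]
    push_cast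
    ring
  rw [e, ← Complex.ofReal_add, Complex.Gamma_ofReal, Complex.Gamma_ofReal,
    Complex.Gamma_ofReal] at h
  have h2 : Real.Gamma a * Real.Gamma b =
      Real.Gamma (a + b) * ∫ x in (0:ℝ)..1, x ^ (a - 1) * (1 - x) ^ (b - 1) := by
    exact_mod_cast h
  have hG : Real.Gamma (a + b) ≠ 0 := (Real.Gamma_pos_of_pos (by linarith)).ne'
  rw [eq_div_iff hG]
  linear_combination -h2

lemma ioo_beta {a b : ℝ} (ha : 0 < a) (hb : 0 < b) :
    ∫ x in Ioo (0:ℝ) 1, x ^ (a - 1) * (1 - x) ^ (b - 1) =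
      Real.Gamma a * Real.Gamma b / Real.Gamma (a + b) := by
  rw [← MeasureTheory.integral_Ioc_eq_integral_Ioo,
    ← intervalIntegral.integral_of_le zero_le_one]
  exact real_beta ha hb

lemma integral_ball1 (m : ℕ) {β : ℝ} (hβ : -1 < β) :
    ∫ y : EuclideanSpace ℝ (Fin m), ball1 β y = 1 / betaConst m β := by
  have hΓβ : Real.Gamma (β + 1) ≠ 0 := (Real.Gamma_pos_of_pos (by linarith)).ne'
  rcases Nat.eq_zero_or_pos m with rfl | hm
  · -- m = 0
    have h1 : (volume : Measure (EuclideanSpace ℝ (Fin 0))) univ = 1 := by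
      rw [← ((EuclideanSpace.volume_preserving_symm_measurableEquiv_toLp (Fin 0)).symm).measure_preimage
        MeasurableSet.univ.nullMeasurableSet]
      rw [Set.preimage_univ, volume_pi, Measure.pi_univ]; simp
    haveI : IsProbabilityMeasure (volume : Measure (EuclideanSpace ℝ (Fin 0))) := ⟨h1⟩
    have hfun : (ball1 β : EuclideanSpace ℝ (Fin 0) → ℝ) = fun _ => 1 := by
      funext y
      have : ‖y‖ = 0 := by simp [EuclideanSpace.norm_eq]
      simp [ball1, this]
    rw [hfun]
    simp [betaConst, Real.rpow_zero, div_self hΓβ]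
  · -- m ≥ 1
    haveI : Nontrivial (EuclideanSpace ℝ (Fin m)) := by
      apply Module.nontrivial_of_finrank_pos (R := ℝ)
      rw [finrank_euclideanSpace_fin]
      exact hm
    have hdim : Module.finrank ℝ (EuclideanSpace ℝ (Fin m)) = m := finrank_euclideanSpace_fin
    have hb : (fun y : EuclideanSpace ℝ (Fin m) => ball1 β y) = fun y => g0 β ‖y‖ := rfl
    rw [hb, integral_fun_norm_addHaar volume (g0 β), hdim]
    -- volume of unit ball
    have hball : (volume (Metric.ball (0:EuclideanSpace ℝ (Fin m)) 1)).toReal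
        = Real.sqrt Real.pi ^ m / Real.Gamma ((m:ℝ)/2 + 1) := by
      haveI : Nonempty (Fin m) := ⟨⟨0, hm⟩⟩
      rw [EuclideanSpace.volume_ball (x := (0:EuclideanSpace ℝ (Fin m))) (r := 1), Fintype.card_fin]
      simp only [ENNReal.ofReal_one, one_pow, one_mul]
      rw [ENNReal.toReal_ofReal (by positivity)]
    rw [measureReal_def, hball]
    -- radial integral
    have hm1 : (1:ℝ) ≤ (m:ℝ) := by exact_mod_cast hm
    set gR : ℝ → ℝ := fun t => t ^ ((m:ℝ)/2 - 1) * (if t < 1 then (1 - t) ^ β else 0) with hgR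
    have key := integral_comp_rpow_Ioi_of_pos (g := gR) (p := 2) two_pos
    have hcongr : ∀ x ∈ Ioi (0:ℝ),
        (2 * x ^ ((2:ℝ) - 1)) • gR (x ^ (2:ℝ)) = 2 * (x ^ (m - 1) • g0 β x) := by
      intro x hx
      have hx0 : (0:ℝ) < x := hx
      have hA : x ^ ((2:ℝ) - 1) = x := by norm_num
      have hB : x ^ (2:ℝ) = x ^ 2 := Real.rpow_two x
      simp only [hgR, smul_eq_mul]
      rw [hA, hB]
      have e1 : ((x^2:ℝ)) ^ ((m:ℝ)/2 - 1) = x ^ ((m:ℝ) - 2) := by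
        rw [← Real.rpow_natCast x 2, ← Real.rpow_mul hx0.le]
        congr 1
        push_cast
        ring
      have e3 : (x:ℝ) ^ (m-1:ℕ) = x ^ ((m:ℝ)-1) := by
        rw [← Real.rpow_natCast x (m-1)]
        congr 1
        push_cast [Nat.cast_sub hm]
        ring
      have e4 : x ^ ((m:ℝ)-1) = x * x ^ ((m:ℝ) - 2) := by
        rw [show (m:ℝ)-1 = 1 + ((m:ℝ)-2) by ring, Real.rpow_add hx0, Real.rpow_one]
      rw [e1, e3, e4]
      have : g0 β x = if x^2 < 1 then (1-x^2)^β else 0 := rfl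
      rw [this]
      ring
    rw [setIntegral_congr_fun measurableSet_Ioi hcongr, integral_const_mul 2] at key
    -- identify RHS of key with beta integral
    have hval : ∫ t in Ioi (0:ℝ), gR t
        = Real.Gamma ((m:ℝ)/2) * Real.Gamma (β+1) / Real.Gamma ((m:ℝ)/2 + (β+1)) := by
      have hind : ∀ t ∈ Ioi (0:ℝ), gR t
          = (Ioo (0:ℝ) 1).indicator (fun t => t ^ ((m:ℝ)/2 - 1) * (1 - t) ^ ((β+1) - 1)) t := by
        intro t ht
        by_cases h : t < 1
        · have ht1 : t ∈ Ioo (0:ℝ) 1 := ⟨ht, h⟩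
          rw [indicator_of_mem ht1]
          simp only [hgR]
          rw [if_pos h]
          norm_num
        · have ht1 : t ∉ Ioo (0:ℝ) 1 := fun hc => h hc.2
          rw [indicator_of_notMem ht1]
          simp only [hgR]
          rw [if_neg h, mul_zero]
      rw [setIntegral_congr_fun measurableSet_Ioi hind, setIntegral_indicator measurableSet_Ioo,
        Set.inter_eq_self_of_subset_right Ioo_subset_Ioi_self]
      exact ioo_beta (by positivity) (by linarith)
    rw [hval] at key
    -- now: 2 * ∫ x in Ioi 0, x^(m-1) • g0 β x = Γ(m/2)Γ(β+1)/Γ(m/2+β+1)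
    -- assemble
    have hΓm2 : Real.Gamma ((m:ℝ)/2) ≠ 0 := (Real.Gamma_pos_of_pos (by positivity)).ne'
    have hΓs : Real.Gamma ((m:ℝ)/2 + β + 1) ≠ 0 := by
      refine (Real.Gamma_pos_of_pos ?_).ne'
      have : (0:ℝ) ≤ (m:ℝ)/2 := by positivity
      linarith
    have hΓm1 : Real.Gamma ((m:ℝ)/2 + 1) = ((m:ℝ)/2) * Real.Gamma ((m:ℝ)/2) :=
      Real.Gamma_add_one (by positivity)
    have hsq : Real.sqrt Real.pi ^ m = Real.pi ^ ((m:ℝ)/2) := by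
      rw [Real.sqrt_eq_rpow, ← Real.rpow_natCast (Real.pi ^ ((1:ℝ)/2)) m,
        ← Real.rpow_mul Real.pi_pos.le]
      congr 1
      ring
    rw [show (m:ℝ)/2 + (β+1) = (m:ℝ)/2 + β + 1 by ring] at key
    have hradial : ∫ x in Ioi (0:ℝ), x ^ (m-1) • g0 β x
        = Real.Gamma ((m:ℝ)/2) * Real.Gamma (β+1) / (2 * Real.Gamma ((m:ℝ)/2 + β + 1)) := by
      rw [eq_div_iff hΓs] at key
      rw [eq_div_iff (mul_ne_zero two_ne_zero hΓs)]
      simp only [smul_eq_mul] at key ⊢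
      linear_combination key
    rw [hradial, nsmul_eq_mul, smul_eq_mul]
    rw [betaConst, hsq, hΓm1, one_div_div]
    have hπ : Real.pi ^ ((m:ℝ)/2) ≠ 0 := (Real.rpow_pos_of_pos Real.pi_pos _).ne'
    have hm0 : (m:ℝ) ≠ 0 := by positivity
    set P := Real.pi ^ ((m:ℝ)/2) with hP
    set A := Real.Gamma ((m:ℝ)/2) with hA
    set B := Real.Gamma (β+1) with hB
    set S := Real.Gamma ((m:ℝ)/2 + β + 1) with hS
    field_simp

lemma integrable_ball1 (m : ℕ) {β : ℝ} (hβ : -1 < β) :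
    Integrable (ball1 β : EuclideanSpace ℝ (Fin m) → ℝ) := by
  by_contra hc
  have h0 := integral_undef hc
  rw [integral_ball1 m hβ] at h0
  exact (one_div_ne_zero (betaConst_pos hβ).ne') h0

lemma scaled (m : ℕ) {β : ℝ} (hβ : -1 < β) {a : ℝ} (ha : 0 < a) :
    Integrable (fun y : EuclideanSpace ℝ (Fin m) => if ‖y‖^2 < a then (a - ‖y‖^2) ^ β else 0) ∧
    ∫ y : EuclideanSpace ℝ (Fin m), (if ‖y‖^2 < a then (a - ‖y‖^2) ^ β else 0)
      = a ^ (β + (m:ℝ)/2) * (1 / betaConst m β) := by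
  set R := Real.sqrt a with hRdef
  have hR0 : 0 < R := Real.sqrt_pos.mpr ha
  have hR : R ≠ 0 := hR0.ne'
  have hR2 : R ^ 2 = a := Real.sq_sqrt ha.le
  set f : EuclideanSpace ℝ (Fin m) → ℝ := fun y => if ‖y‖^2 < a then (a - ‖y‖^2) ^ β else 0
    with hf
  have hdim : Module.finrank ℝ (EuclideanSpace ℝ (Fin m)) = m := finrank_euclideanSpace_fin
  have hcomp : (fun y : EuclideanSpace ℝ (Fin m) => f (R • y)) = fun y => a ^ β * ball1 β y := by
    funext y
    have hnorm : ‖(R • y : EuclideanSpace ℝ (Fin m))‖ ^ 2 = a * ‖y‖^2 := by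
      rw [norm_smul, Real.norm_eq_abs, mul_pow, sq_abs, hR2]
    simp only [hf, hnorm, ball1]
    by_cases h : ‖y‖ ^ 2 < 1
    · rw [if_pos (by nlinarith), if_pos h]
      rw [show a - a * ‖y‖^2 = a * (1 - ‖y‖^2) by ring,
        Real.mul_rpow ha.le (by nlinarith)]
    · rw [if_neg (by nlinarith), if_neg h, mul_zero]
  have hint : Integrable f := by
    rw [← integrable_comp_smul_iff volume f hR, hcomp]
    exact (integrable_ball1 m hβ).const_mul _
  refine ⟨hint, ?_⟩
  have := Measure.integral_comp_smul volume f R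
  rw [hcomp, hdim] at this
  rw [integral_const_mul, integral_ball1 m hβ] at this
  have hRm : |((R:ℝ) ^ m)⁻¹| = (R ^ m)⁻¹ := by
    rw [abs_of_nonneg]
    positivity
  rw [hRm, smul_eq_mul] at this
  have hRmne : ((R:ℝ) ^ m) ≠ 0 := by positivity
  have hRma : (R:ℝ) ^ m = a ^ ((m:ℝ)/2) := by
    rw [hRdef, Real.sqrt_eq_rpow, ← Real.rpow_natCast (a ^ ((1:ℝ)/2)) m,
      ← Real.rpow_mul ha.le]
    congr 1
    ring
  rw [hRma] at this
  have h2 : ∫ x, f x = a ^ ((m:ℝ)/2) * (a ^ β * (1 / betaConst m β)) := by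
    rw [this, ← mul_assoc, mul_inv_cancel₀ (by positivity : (a:ℝ) ^ ((m:ℝ)/2) ≠ 0), one_mul]
  rw [h2, ← mul_assoc, ← Real.rpow_add ha, show (m:ℝ)/2 + β = β + (m:ℝ)/2 by ring]

noncomputable def splitE (m : ℕ) :
    EuclideanSpace ℝ (Fin (m+1)) ≃ᵐ ℝ × EuclideanSpace ℝ (Fin m) :=
  (MeasurableEquiv.toLp 2 (Fin (m+1) → ℝ)).symm.trans
    ((MeasurableEquiv.piFinSuccAbove (fun _ : Fin (m+1) => ℝ) (Fin.last m)).trans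
      (MeasurableEquiv.prodCongr (MeasurableEquiv.refl ℝ)
        (MeasurableEquiv.toLp 2 (Fin m → ℝ))))

lemma splitE_fst (m : ℕ) (x : EuclideanSpace ℝ (Fin (m+1))) :
    (splitE m x).1 = x (Fin.last m) := rfl

lemma normsq_eq {k : ℕ} (x : EuclideanSpace ℝ (Fin k)) : ‖x‖^2 = ∑ i, (x i)^2 := by
  rw [EuclideanSpace.norm_eq, Real.sq_sqrt (by positivity)]
  congr 1
  funext i
  rw [Real.norm_eq_abs, sq_abs]

lemma splitE_normsq (m : ℕ) (x : EuclideanSpace ℝ (Fin (m+1))) :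
    ‖x‖^2 = (x (Fin.last m))^2 + ‖(splitE m x).2‖^2 := by
  rw [normsq_eq, normsq_eq]
  rw [Fin.sum_univ_castSucc]
  rw [add_comm]
  congr 1
  apply Finset.sum_congr rfl
  intro j _
  have : (splitE m x).2 j = x ((Fin.last m).succAbove j) := rfl
  rw [this, Fin.succAbove_last]

lemma mp_splitE (m : ℕ) :
    MeasurePreserving (splitE m) volume ((volume : Measure ℝ).prod volume) := by
  have h1 := EuclideanSpace.volume_preserving_symm_measurableEquiv_toLp (Fin (m+1))
  have h2 := measurePreserving_piFinSuccAbove (fun _ : Fin (m+1) => (volume : Measure ℝ)) (Fin.last m)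
  have h3 := (EuclideanSpace.volume_preserving_symm_measurableEquiv_toLp (Fin m)).symm
  have h4 := (MeasurePreserving.id (volume : Measure ℝ)).prod h3
  rw [← volume_pi] at h2
  have := (h4.comp h2).comp h1
  convert this using 1 <;> rfl

lemma slice_lemma (m : ℕ) {β : ℝ} (hβ : -1 < β) {S : Set ℝ} (hS : MeasurableSet S) :
    ∫⁻ x in {x : EuclideanSpace ℝ (Fin (m+1)) | x (Fin.last m) ∈ S}, ENNReal.ofReal (ball1 β x)
      = ∫⁻ t in S, ENNReal.ofReal ((1 / betaConst m β) * g0 (β + (m:ℝ)/2) t) := by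
  set g : ℝ × EuclideanSpace ℝ (Fin m) → ENNReal := fun p =>
    ENNReal.ofReal (if p.1^2 + ‖p.2‖^2 < 1 then (1 - (p.1^2 + ‖p.2‖^2)) ^ β else 0) with hg
  have hgmeas : Measurable g := by
    apply Measurable.ennreal_ofReal
    exact Measurable.ite (measurableSet_lt (by fun_prop) measurable_const) (by fun_prop)
      measurable_const
  have hset : {x : EuclideanSpace ℝ (Fin (m+1)) | x (Fin.last m) ∈ S}
      = splitE m ⁻¹' (S ×ˢ univ) := by
    ext x
    simp only [mem_setOf_eq, mem_preimage, mem_prod, mem_univ, and_true]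
    rw [splitE_fst]
  have hcomp : ∀ x : EuclideanSpace ℝ (Fin (m+1)),
      ENNReal.ofReal (ball1 β x) = g (splitE m x) := by
    intro x
    have h1 : (splitE m x).1 = x (Fin.last m) := rfl
    simp only [hg, h1, ← splitE_normsq]
    rfl
  rw [hset]
  rw [lintegral_congr (fun x => hcomp x)]
  rw [(mp_splitE m).setLIntegral_comp_preimage_emb (splitE m).measurableEmbedding g (S ×ˢ univ)]
  rw [← Measure.prod_restrict S univ, Measure.restrict_univ]
  rw [lintegral_prod g hgmeas.aemeasurable]
  apply lintegral_congr
  intro t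
  rcases lt_or_ge (t^2) 1 with h | h
  · have ha : (0:ℝ) < 1 - t^2 := by linarith
    have he : ∀ y : EuclideanSpace ℝ (Fin m), g (t, y)
        = ENNReal.ofReal (if ‖y‖^2 < 1 - t^2 then ((1 - t^2) - ‖y‖^2) ^ β else 0) := by
      intro y
      simp only [hg]
      congr 1
      by_cases hy : ‖y‖^2 < 1 - t^2
      · rw [if_pos (by linarith), if_pos hy]
        ring_nf
      · rw [if_neg (fun hc => hy (by linarith)), if_neg hy]
    rw [lintegral_congr he]
    rw [← ofReal_integral_eq_lintegral_ofReal (scaled m hβ ha).1 (ae_of_all _ fun y => by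
      dsimp only
      split_ifs with hy
      · exact Real.rpow_nonneg (by linarith) _
      · exact le_refl 0)]
    rw [(scaled m hβ ha).2]
    congr 1
    rw [g0, if_pos h]
    ring
  · have he : ∀ y : EuclideanSpace ℝ (Fin m), g (t, y) = 0 := by
      intro y
      simp only [hg]
      rw [if_neg (by nlinarith [sq_nonneg ‖y‖, norm_nonneg y]), ENNReal.ofReal_zero]
    rw [lintegral_congr he, lintegral_zero, g0, if_neg (not_lt.mpr h), mul_zero,
      ENNReal.ofReal_zero]

lemma cap_formula (m : ℕ) {β : ℝ} (hβ : -1 < β) (s : ℝ) :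
    (betaMeasure (m+1) β {x : EuclideanSpace ℝ (Fin (m+1)) | s ≤ x (Fin.last m)}).toReal
      = ∫ t in Ici s, (betaConst (m+1) β / betaConst m β) * g0 (β + (m:ℝ)/2) t := by
  have hγ : -1 < β + (m:ℝ)/2 := by
    have : (0:ℝ) ≤ (m:ℝ)/2 := by positivity
    linarith
  have hc2 : (0:ℝ) ≤ betaConst (m+1) β := (betaConst_pos hβ).le
  have hc1 : (0:ℝ) < betaConst m β := betaConst_pos hβ
  have hmeasset : MeasurableSet {x : EuclideanSpace ℝ (Fin (m+1)) | s ≤ x (Fin.last m)} := by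
    have hcoord : Measurable fun x : EuclideanSpace ℝ (Fin (m+1)) => x (Fin.last m) :=
      (measurable_pi_apply (Fin.last m)).comp
        (MeasurableEquiv.toLp 2 (Fin (m+1) → ℝ)).symm.measurable
    exact measurableSet_le measurable_const hcoord
  rw [betaMeasure, withDensity_apply _ hmeasset]
  have hden : ∀ x : EuclideanSpace ℝ (Fin (m+1)), ENNReal.ofReal (betaDensity (m+1) β x)
      = ENNReal.ofReal (betaConst (m+1) β) * ENNReal.ofReal (ball1 β x) := by
    intro x
    rw [← ENNReal.ofReal_mul hc2]
    congr 1
    rw [betaDensity, ball1]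
    have hiff : ‖x‖ < 1 ↔ ‖x‖^2 < 1 := by
      constructor
      · intro h; nlinarith [norm_nonneg x]
      · intro h; nlinarith [norm_nonneg x]
    by_cases h : ‖x‖ < 1
    · rw [if_pos h, if_pos (hiff.mp h)]
    · rw [if_neg h, if_neg (fun hc => h (hiff.mpr hc)), mul_zero]
  rw [lintegral_congr hden]
  rw [lintegral_const_mul _ (measurable_ball1 β (m+1)).ennreal_ofReal]
  have hsets : {x : EuclideanSpace ℝ (Fin (m+1)) | s ≤ x (Fin.last m)}
      = {x : EuclideanSpace ℝ (Fin (m+1)) | x (Fin.last m) ∈ Ici s} := rfl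
  rw [hsets, slice_lemma m hβ measurableSet_Ici]
  rw [← lintegral_const_mul _ (((measurable_g0 _).const_mul _).ennreal_ofReal)]
  have hcomb : ∀ t : ℝ, ENNReal.ofReal (betaConst (m+1) β)
        * ENNReal.ofReal ((1 / betaConst m β) * g0 (β + (m:ℝ)/2) t)
      = ENNReal.ofReal ((betaConst (m+1) β / betaConst m β) * g0 (β + (m:ℝ)/2) t) := by
    intro t
    rw [← ENNReal.ofReal_mul hc2]
    congr 1
    field_simp
  rw [lintegral_congr hcomb]
  have hG : Integrable (fun t => (betaConst (m+1) β / betaConst m β) * g0 (β + (m:ℝ)/2) t) :=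
    (integrable_g0 hγ).const_mul _
  rw [← ofReal_integral_eq_lintegral_ofReal hG.restrict (ae_of_all _ fun t =>
    mul_nonneg (div_nonneg hc2 hc1.le) (g0_nonneg _ _))]
  rw [ENNReal.toReal_ofReal (integral_nonneg fun t =>
    mul_nonneg (div_nonneg hc2 hc1.le) (g0_nonneg _ _))]

lemma ratio_lemma (m : ℕ) {β : ℝ} (hβ : -1 < β) :
    betaConst (m+1) β / betaConst m β = betaConst 1 (β + (m:ℝ)/2) := by
  have hΓβ : Real.Gamma (β + 1) ≠ 0 := (Real.Gamma_pos_of_pos (by linarith)).ne'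
  have hm0 : (0:ℝ) ≤ (m:ℝ)/2 := by positivity
  have hΓs : Real.Gamma ((m:ℝ)/2 + β + 1) ≠ 0 := (Real.Gamma_pos_of_pos (by linarith)).ne'
  have hπ : (0:ℝ) < Real.pi ^ ((m:ℝ)/2) := Real.rpow_pos_of_pos Real.pi_pos _
  have hπ2 : (0:ℝ) < Real.pi ^ ((1:ℝ)/2) := Real.rpow_pos_of_pos Real.pi_pos _
  rw [betaConst, betaConst, betaConst]
  rw [show ((m+1:ℕ):ℝ) = (m:ℝ) + 1 by push_cast; ring]
  rw [show ((m:ℝ)+1)/2 = (m:ℝ)/2 + (1:ℝ)/2 by ring]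
  rw [Real.rpow_add Real.pi_pos]
  rw [show ((1:ℕ):ℝ)/2 = (1:ℝ)/2 by norm_num]
  rw [show (m:ℝ)/2 + (1:ℝ)/2 + β + 1 = (1:ℝ)/2 + (β + (m:ℝ)/2) + 1 by ring]
  rw [show β + (m:ℝ)/2 + 1 = (m:ℝ)/2 + β + 1 by ring]
  set A := Real.Gamma ((1:ℝ)/2 + (β + (m:ℝ)/2) + 1) with hA
  set B := Real.Gamma (β + 1) with hB
  set S := Real.Gamma ((m:ℝ)/2 + β + 1) with hSdef
  set P := Real.pi ^ ((m:ℝ)/2) with hP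
  set Q := Real.pi ^ ((1:ℝ)/2) with hQ
  rw [div_div_div_eq]
  rw [div_eq_div_iff (by positivity) (by positivity)]
  ring


/-- The beta measure `v(h) = μ_{n,β}({xₙ ≥ h})` of the cap of `Bₙ` cut off
by `{xₙ ≥ h}` is differentiable on `(−1,1)` with
`v'(h) = −c_{1,β+(n−1)/2}·(1−h²)^{β+(n−1)/2}`. -/
theorem hasDerivAt_betaMeasure_cap (n : ℕ) (hn : 1 ≤ n) (β : ℝ) (hβ : -1 < β)
    (h : ℝ) (hh : h ∈ Set.Ioo (-1 : ℝ) 1) :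
    HasDerivAt (fun s : ℝ =>
        (betaMeasure n β {x : EuclideanSpace ℝ (Fin n) | s ≤ x ⟨n - 1, by omega⟩}).toReal)
      (-(betaConst 1 (β + ((n : ℝ) - 1) / 2) * (1 - h ^ 2) ^ (β + ((n : ℝ) - 1) / 2))) h := by
  obtain ⟨m, rfl⟩ : ∃ m, n = m + 1 := ⟨n - 1, by omega⟩
  have hidx : (⟨m + 1 - 1, by omega⟩ : Fin (m+1)) = Fin.last m := rfl
  have hγ : -1 < β + (m:ℝ)/2 := by
    have : (0:ℝ) ≤ (m:ℝ)/2 := by positivity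
    linarith
  set γ := β + (m:ℝ)/2 with hγdef
  set C := betaConst (m+1) β / betaConst m β with hC
  set G : ℝ → ℝ := fun t => C * g0 γ t with hGdef
  have hGint : Integrable G := (integrable_g0 hγ).const_mul _
  have hGmeas : Measurable G := (measurable_g0 γ).const_mul _
  have hfun : (fun s : ℝ => (betaMeasure (m+1) β
      {x : EuclideanSpace ℝ (Fin (m+1)) | s ≤ x ⟨m + 1 - 1, by omega⟩}).toReal)
      = fun s => (∫ t, G t) - ∫ t in Iic s, G t := by
    funext s
    rw [hidx, cap_formula m hβ s]
    have h1 := integral_add_compl (s := Ici s) measurableSet_Ici hGint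
    rw [compl_Ici] at h1
    rw [MeasureTheory.integral_Iic_eq_integral_Iio]
    linarith [h1]
  rw [hfun]
  have hIic : ∀ s : ℝ, ∫ t in Iic s, G t = (∫ t in Iic h, G t) + ∫ t in h..s, G t := by
    intro s
    rw [← intervalIntegral.integral_Iic_sub_Iic hGint.integrableOn hGint.integrableOn]
    ring
  have hfun2 : (fun s : ℝ => (∫ t, G t) - ∫ t in Iic s, G t)
      = fun s => ((∫ t, G t) - ∫ t in Iic h, G t) - ∫ t in h..s, G t := by
    funext s
    rw [hIic s]
    ring
  rw [hfun2]
  have hcont : ContinuousAt G h := by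
    have hopen : IsOpen {t : ℝ | t^2 < 1} := isOpen_lt (by fun_prop) continuous_const
    have hmem : h ∈ {t : ℝ | t^2 < 1} := by
      simp only [mem_setOf_eq]
      nlinarith [hh.1, hh.2]
    have heq : G =ᶠ[nhds h] (fun t : ℝ => C * (1 - t^2) ^ γ) := by
      filter_upwards [hopen.mem_nhds hmem] with t ht
      rw [hGdef]
      simp only
      rw [g0, if_pos ht]
    have hcont2 : ContinuousAt (fun t : ℝ => C * (1 - t^2) ^ γ) h := by
      have hrpow : ContinuousAt (fun t : ℝ => (1 - t^2) ^ γ) h := by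
        apply ContinuousAt.rpow_const (by fun_prop)
        exact Or.inl (show (0:ℝ) < 1 - h^2 by nlinarith [hh.1, hh.2]).ne'
      exact continuousAt_const.mul hrpow
    exact hcont2.congr heq.symm
  have hderiv : HasDerivAt (fun s : ℝ => ∫ t in h..s, G t) (G h) h :=
    intervalIntegral.integral_hasDerivAt_right hGint.intervalIntegrable
      hGmeas.stronglyMeasurable.stronglyMeasurableAtFilter hcont
  have := hderiv.const_sub ((∫ t, G t) - ∫ t in Iic h, G t)
  refine this.congr_deriv ?_
  have hh2 : h^2 < 1 := by nlinarith [hh.1, hh.2]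
  rw [hGdef]
  simp only
  rw [g0, if_pos hh2, hC, ratio_lemma m hβ]
  have hexp : β + (((m:ℕ):ℝ) + 1 - 1)/2 = γ := by
    rw [hγdef]
    ring
  rw [show ((m+1:ℕ):ℝ) = ((m:ℕ):ℝ) + 1 by push_cast; ring, hexp]
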